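/- arXiv:1211.4560 — 2 statements merged into one kernel-verified Lean document; each statement's English description precedes it below -/
import Mathlib

section
/- The pullback of the area form on S² along the Hopf fibration is exact: π*Ω = 2 dA, where A is the connection one-form A(φ) = Im(φ† dφ) on S³ and Ω is the standard area form on S². -/
open Complex

/-- The Pauli spin matrices. -/
def pauli : Fin 3 → Matrix (Fin 2) (Fin 2) ℂ
  | 0 => !![0, 1; 1, 0]
  | 1 => !![0, -Complex.I; Complex.I, 0]
  | 2 => !![1, 0; 0, -1]

/-- The Hopf map `π : ℂ² → ℝ³`, `π(φ)_α = φ†σ_αφ`, extended to all of `ℂ²`. -/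
noncomputable def hopfPauli (φ : Fin 2 → ℂ) : Fin 3 → ℝ := fun α =>
  (∑ a : Fin 2, ∑ b : Fin 2, (starRingEnd ℂ (φ a)) * pauli α a b * φ b).re

/-- The scalar triple product `x · (y × z)` in `ℝ³`. -/
def tripleProduct (x y z : Fin 3 → ℝ) : ℝ :=
  x 0 * (y 1 * z 2 - y 2 * z 1) + x 1 * (y 2 * z 0 - y 0 * z 2) +
    x 2 * (y 0 * z 1 - y 1 * z 0)

lemma hopf_hasFDerivAt (φ : Fin 2 → ℂ) :
    HasFDerivAt hopfPauli
      (ContinuousLinearMap.pi fun α : Fin 3 => Complex.reCLM.comp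
        (∑ a : Fin 2, ∑ b : Fin 2,
          ((starRingEnd ℂ (φ a) * pauli α a b) • ContinuousLinearMap.proj b +
            φ b • ((pauli α a b) •
              ((Complex.conjCLE : ℂ →L[ℝ] ℂ).comp
                (ContinuousLinearMap.proj a)))))) φ := by
  unfold hopfPauli
  apply hasFDerivAt_pi.2
  intro α
  have hsum : HasFDerivAt (fun x : Fin 2 → ℂ => ∑ a : Fin 2, ∑ b : Fin 2,
      (starRingEnd ℂ) (x a) * pauli α a b * x b)
      (∑ a : Fin 2, ∑ b : Fin 2,
        (((starRingEnd ℂ) (φ a) * pauli α a b) • ContinuousLinearMap.proj b +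
          φ b • pauli α a b • ((Complex.conjCLE : ℂ →L[ℝ] ℂ)).comp
            (ContinuousLinearMap.proj a))) φ := by
    apply HasFDerivAt.fun_sum; intro a _
    apply HasFDerivAt.fun_sum; intro b _
    have h1 : HasFDerivAt (fun x : Fin 2 → ℂ => starRingEnd ℂ (x a))
        ((Complex.conjCLE : ℂ →L[ℝ] ℂ).comp (ContinuousLinearMap.proj a)) φ :=
      (Complex.conjCLE.hasFDerivAt).comp φ (hasFDerivAt_apply a φ)
    exact (h1.mul_const (pauli α a b)).mul (hasFDerivAt_apply b φ)
  exact (Complex.reCLM.hasFDerivAt).comp φ hsum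

lemma hopf_fderiv_apply (φ v : Fin 2 → ℂ) (α : Fin 3) :
    fderiv ℝ hopfPauli φ v α =
      (∑ a : Fin 2, ∑ b : Fin 2,
        (starRingEnd ℂ (v a) * pauli α a b * φ b +
          starRingEnd ℂ (φ a) * pauli α a b * v b)).re := by
  rw [(hopf_hasFDerivAt φ).fderiv]
  simp only [ContinuousLinearMap.pi_apply, ContinuousLinearMap.coe_comp',
    Function.comp_apply, ContinuousLinearMap.coe_sum', Finset.sum_apply,
    ContinuousLinearMap.add_apply, ContinuousLinearMap.coe_smul',
    Pi.smul_apply, ContinuousLinearMap.proj_apply, Complex.reCLM_apply,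
    ContinuousLinearEquiv.coe_coe, Complex.conjCLE_apply,
    smul_eq_mul]
  congr 1
  refine Finset.sum_congr rfl fun a _ => Finset.sum_congr rfl fun b _ => ?_
  ring

set_option maxRecDepth 8000 in
set_option maxHeartbeats 2000000 in
/-- **The pullback of the area form of `S²` along the Hopf fibration is exact: `π*Ω = 2 dA`.**
Here `Ω(x)(δx,δy) = x · (δx × δy)` is the area form of `S²`, the pullback is computed with
the (Fréchet) derivative of the Hopf map, `A` is the connection one-form
`A(φ)·v = Im⟨φ,v⟩ = Im(φ†v)` on `S³`, and its exterior derivative is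
`dA(φ)(v,w) = Im⟨v,w⟩ − Im⟨w,v⟩`.  The identity holds at every `φ ∈ S³` and for all
tangent vectors `v, w` to `S³` at `φ`. -/
theorem hopf_pullback_area_form (φ v w : Fin 2 → ℂ)
    (hφ : ∑ a : Fin 2, ‖φ a‖ ^ 2 = 1)
    (hv : (∑ a : Fin 2, (starRingEnd ℂ (v a)) * φ a).re = 0)
    (hw : (∑ a : Fin 2, (starRingEnd ℂ (w a)) * φ a).re = 0) :
    tripleProduct (hopfPauli φ) (fderiv ℝ hopfPauli φ v) (fderiv ℝ hopfPauli φ w) =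
      2 * ((∑ a : Fin 2, (starRingEnd ℂ (v a)) * w a).im
            - (∑ a : Fin 2, (starRingEnd ℂ (w a)) * v a).im) := by
  have h1 : (φ 0).re*(φ 0).re + (φ 0).im*(φ 0).im + ((φ 1).re*(φ 1).re + (φ 1).im*(φ 1).im) = 1 := by
    simpa [Fin.sum_univ_two, Complex.sq_norm, Complex.normSq_apply] using hφ
  have hv' : (v 0).re * (φ 0).re + (v 0).im * (φ 0).im + ((v 1).re * (φ 1).re + (v 1).im * (φ 1).im) = 0 := by
    simpa [Fin.sum_univ_two, Complex.add_re, Complex.mul_re, Complex.conj_re, Complex.conj_im] using hv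
  have hw' : (w 0).re * (φ 0).re + (w 0).im * (φ 0).im + ((w 1).re * (φ 1).re + (w 1).im * (φ 1).im) = 0 := by
    simpa [Fin.sum_univ_two, Complex.add_re, Complex.mul_re, Complex.conj_re, Complex.conj_im] using hw
  have hn0 : hopfPauli φ 0 = 2*((φ 0).re*(φ 1).re + (φ 0).im*(φ 1).im) := by
    simp [hopfPauli, hopf_fderiv_apply, pauli, Fin.sum_univ_two, Complex.add_re, Complex.add_im, Complex.mul_re, Complex.mul_im, Complex.conj_re, Complex.conj_im, Complex.I_re, Complex.I_im, Complex.neg_re, Complex.neg_im, Complex.one_re, Complex.one_im, Complex.zero_re, Complex.zero_im]; ring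
  have hn1 : hopfPauli φ 1 = 2*((φ 0).re*(φ 1).im - (φ 0).im*(φ 1).re) := by
    simp [hopfPauli, hopf_fderiv_apply, pauli, Fin.sum_univ_two, Complex.add_re, Complex.add_im, Complex.mul_re, Complex.mul_im, Complex.conj_re, Complex.conj_im, Complex.I_re, Complex.I_im, Complex.neg_re, Complex.neg_im, Complex.one_re, Complex.one_im, Complex.zero_re, Complex.zero_im]; ring
  have hn2 : hopfPauli φ 2 = (φ 0).re*(φ 0).re + (φ 0).im*(φ 0).im - (φ 1).re*(φ 1).re - (φ 1).im*(φ 1).im := by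
    simp [hopfPauli, hopf_fderiv_apply, pauli, Fin.sum_univ_two, Complex.add_re, Complex.add_im, Complex.mul_re, Complex.mul_im, Complex.conj_re, Complex.conj_im, Complex.I_re, Complex.I_im, Complex.neg_re, Complex.neg_im, Complex.one_re, Complex.one_im, Complex.zero_re, Complex.zero_im]; ring
  have hdv0 : fderiv ℝ hopfPauli φ v 0 = 2*((φ 0).re*(v 1).re + (φ 0).im*(v 1).im + (φ 1).re*(v 0).re + (φ 1).im*(v 0).im) := by
    simp [hopfPauli, hopf_fderiv_apply, pauli, Fin.sum_univ_two, Complex.add_re, Complex.add_im, Complex.mul_re, Complex.mul_im, Complex.conj_re, Complex.conj_im, Complex.I_re, Complex.I_im, Complex.neg_re, Complex.neg_im, Complex.one_re, Complex.one_im, Complex.zero_re, Complex.zero_im]; ring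
  have hdv1 : fderiv ℝ hopfPauli φ v 1 = 2*((φ 0).re*(v 1).im - (φ 0).im*(v 1).re - (φ 1).re*(v 0).im + (φ 1).im*(v 0).re) := by
    simp [hopfPauli, hopf_fderiv_apply, pauli, Fin.sum_univ_two, Complex.add_re, Complex.add_im, Complex.mul_re, Complex.mul_im, Complex.conj_re, Complex.conj_im, Complex.I_re, Complex.I_im, Complex.neg_re, Complex.neg_im, Complex.one_re, Complex.one_im, Complex.zero_re, Complex.zero_im]; ring
  have hdv2 : fderiv ℝ hopfPauli φ v 2 = 2*((φ 0).re*(v 0).re + (φ 0).im*(v 0).im - (φ 1).re*(v 1).re - (φ 1).im*(v 1).im) := by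
    simp [hopfPauli, hopf_fderiv_apply, pauli, Fin.sum_univ_two, Complex.add_re, Complex.add_im, Complex.mul_re, Complex.mul_im, Complex.conj_re, Complex.conj_im, Complex.I_re, Complex.I_im, Complex.neg_re, Complex.neg_im, Complex.one_re, Complex.one_im, Complex.zero_re, Complex.zero_im]; ring
  have hdw0 : fderiv ℝ hopfPauli φ w 0 = 2*((φ 0).re*(w 1).re + (φ 0).im*(w 1).im + (φ 1).re*(w 0).re + (φ 1).im*(w 0).im) := by
    simp [hopfPauli, hopf_fderiv_apply, pauli, Fin.sum_univ_two, Complex.add_re, Complex.add_im, Complex.mul_re, Complex.mul_im, Complex.conj_re, Complex.conj_im, Complex.I_re, Complex.I_im, Complex.neg_re, Complex.neg_im, Complex.one_re, Complex.one_im, Complex.zero_re, Complex.zero_im]; ring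
  have hdw1 : fderiv ℝ hopfPauli φ w 1 = 2*((φ 0).re*(w 1).im - (φ 0).im*(w 1).re - (φ 1).re*(w 0).im + (φ 1).im*(w 0).re) := by
    simp [hopfPauli, hopf_fderiv_apply, pauli, Fin.sum_univ_two, Complex.add_re, Complex.add_im, Complex.mul_re, Complex.mul_im, Complex.conj_re, Complex.conj_im, Complex.I_re, Complex.I_im, Complex.neg_re, Complex.neg_im, Complex.one_re, Complex.one_im, Complex.zero_re, Complex.zero_im]; ring
  have hdw2 : fderiv ℝ hopfPauli φ w 2 = 2*((φ 0).re*(w 0).re + (φ 0).im*(w 0).im - (φ 1).re*(w 1).re - (φ 1).im*(w 1).im) := by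
    simp [hopfPauli, hopf_fderiv_apply, pauli, Fin.sum_univ_two, Complex.add_re, Complex.add_im, Complex.mul_re, Complex.mul_im, Complex.conj_re, Complex.conj_im, Complex.I_re, Complex.I_im, Complex.neg_re, Complex.neg_im, Complex.one_re, Complex.one_im, Complex.zero_re, Complex.zero_im]; ring
  have him_v : (∑ a : Fin 2, (starRingEnd ℂ (v a)) * w a).im = (v 0).re*(w 0).im - (v 0).im*(w 0).re + ((v 1).re*(w 1).im - (v 1).im*(w 1).re) := by
    simp [Fin.sum_univ_two, Complex.add_im, Complex.mul_im, Complex.conj_re, Complex.conj_im]; ring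
  have him_w : (∑ a : Fin 2, (starRingEnd ℂ (w a)) * v a).im = (w 0).re*(v 0).im - (w 0).im*(v 0).re + ((w 1).re*(v 1).im - (w 1).im*(v 1).re) := by
    simp [Fin.sum_univ_two, Complex.add_im, Complex.mul_im, Complex.conj_re, Complex.conj_im]; ring
  rw [tripleProduct, hn0, hn1, hn2, hdv0, hdv1, hdv2, hdw0, hdw1, hdw2, him_v, him_w]
  linear_combination ((((φ 0).re^2+(φ 0).im^2+(φ 1).re^2+(φ 1).im^2) + 1) * (4*((v 0).re*(w 0).im - (v 0).im*(w 0).re + (v 1).re*(w 1).im - (v 1).im*(w 1).re))) * h1 +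
    (4*((w 0).re*((φ 0).re^2*(φ 0).im + (φ 0).re*(φ 1).re*(φ 1).im + (φ 0).im^3 + (φ 0).im*(φ 1).re^2 + (φ 0).im*(φ 1).im^2)
      + (w 0).im*(-((φ 0).re^3) - (φ 0).re*(φ 0).im^2 - (φ 0).re*(φ 1).re^2 - (φ 0).re*(φ 1).im^2 + (φ 0).im*(φ 1).re*(φ 1).im)
      + (w 1).re*((φ 0).re^2*(φ 1).im + (φ 0).im^2*(φ 1).im + 2*(φ 1).re^2*(φ 1).im + (φ 1).im^3)
      + (w 1).im*(-((φ 0).re^2*(φ 1).re) - (φ 0).im^2*(φ 1).re - (φ 1).re^3))) * hv' +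
    (-1) * (4*((v 0).re*((φ 0).re^2*(φ 0).im + (φ 0).re*(φ 1).re*(φ 1).im + (φ 0).im^3 + (φ 0).im*(φ 1).re^2 + (φ 0).im*(φ 1).im^2)
      + (v 0).im*(-((φ 0).re^3) - (φ 0).re*(φ 0).im^2 - (φ 0).re*(φ 1).re^2 - (φ 0).re*(φ 1).im^2 + (φ 0).im*(φ 1).re*(φ 1).im)
      + (v 1).re*((φ 0).re^2*(φ 1).im + (φ 0).im^2*(φ 1).im + 2*(φ 1).re^2*(φ 1).im + (φ 1).im^3)
      + (v 1).im*(-((φ 0).re^2*(φ 1).re) - (φ 0).im^2*(φ 1).re - (φ 1).re^3))) * hw'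
end

section
/- If a Hamiltonian H : ℂ² → ℝ satisfies the S¹-invariance H(e^{iθ}φ) = H(φ) for all θ, φ, then the implicit midpoint method −iΓ(φ^{n+1} − φ^n) + (h/2) D_{φ†}H(φ^{n+1/2}) = 0 (with φ^{n+1/2} = (φ^n + φ^{n+1})/2) is length-preserving: ‖φ^{n+1}‖ = ‖φ^n‖. -/
open Complex

/-- **For an `S¹`-invariant Hamiltonian, the implicit midpoint method on `ℂ²` is
length-preserving.**  Here `g = D_{φ†}H` is the Wirtinger gradient of the real-valued
Hamiltonian `H`, characterized by `dH(φ)·v = 2 Re⟨v, g(φ)⟩`, and the midpoint method is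
`−iΓ(φ¹ − φ⁰) + (h/2) g(φ^{1/2}) = 0` with `φ^{1/2} = (φ⁰ + φ¹)/2`. -/
theorem midpoint_method_S1_invariant_length_preserving
    (H : EuclideanSpace ℂ (Fin 2) → ℝ) (g : EuclideanSpace ℂ (Fin 2) → EuclideanSpace ℂ (Fin 2))
    (Γ h : ℝ) (hΓ : Γ ≠ 0) (hh : 0 < h)
    (hdiff : Differentiable ℝ H)
    (hgrad : ∀ (φ v : EuclideanSpace ℂ (Fin 2)),
      fderiv ℝ H φ v = 2 * (∑ a : Fin 2, (starRingEnd ℂ (v a)) * g φ a).re)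
    (hinv : ∀ (θ : ℝ) (φ : EuclideanSpace ℂ (Fin 2)),
      H (Complex.exp (θ * Complex.I) • φ) = H φ)
    (φ₀ φ₁ φm : EuclideanSpace ℂ (Fin 2))
    (hφm : φm = (1 / 2 : ℝ) • (φ₀ + φ₁))
    (hmid : (-(Complex.I) * (Γ : ℂ)) • (φ₁ - φ₀) + ((h / 2 : ℝ) • g φm) = 0) :
    ‖φ₁‖ = ‖φ₀‖ := by
  have hh' : (h : ℂ) ≠ 0 := by exact_mod_cast hh.ne'
  -- Step 1: S¹-invariance forces the gradient pairing with iφ to vanish.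
  have hzero : ∀ φ : EuclideanSpace ℂ (Fin 2),
      (∑ a : Fin 2, (starRingEnd ℂ ((Complex.I • φ) a)) * g φ a).re = 0 := by
    intro φ
    have hγ : HasDerivAt (fun θ : ℝ => Complex.exp ((θ : ℂ) * Complex.I) • φ)
        (Complex.I • φ) 0 := by
      have h1 : HasDerivAt (fun θ : ℝ => ((θ : ℂ) * Complex.I)) Complex.I 0 := by
        simpa using (Complex.ofRealCLM.hasDerivAt (x := (0:ℝ))).mul_const Complex.I
      have h2 : HasDerivAt (fun θ : ℝ => Complex.exp ((θ : ℂ) * Complex.I)) Complex.I 0 := by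
        simpa using h1.cexp
      simpa using h2.smul_const φ
    have h3 := ((hdiff (Complex.exp (((0:ℝ) : ℂ) * Complex.I) • φ)).hasFDerivAt).comp_hasDerivAt
      (0 : ℝ) hγ
    simp only [Function.comp_def] at h3
    have hc : (fun θ : ℝ => H (Complex.exp ((θ : ℂ) * Complex.I) • φ)) = fun _ => H φ := by
      funext θ; exact hinv θ φ
    rw [hc] at h3
    have h4 : (0 : ℝ) = fderiv ℝ H (Complex.exp (((0:ℝ) : ℂ) * Complex.I) • φ)
        (Complex.I • φ) := (hasDerivAt_const (0 : ℝ) (H φ)).unique h3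
    have h5 : fderiv ℝ H φ (Complex.I • φ) = 0 := by
      simpa using h4.symm
    have h6 := hgrad φ (Complex.I • φ)
    rw [h5] at h6
    linarith
  -- Step 2: solve the midpoint relation pointwise for g φm.
  have hg : ∀ a : Fin 2, g φm a = 2 / (h : ℂ) * (Complex.I * (Γ : ℂ)) * (φ₁ a - φ₀ a) := by
    intro a
    have h1 : (-(Complex.I) * (Γ : ℂ)) * (φ₁ a - φ₀ a) + ((h / 2 : ℝ) : ℂ) * g φm a = 0 := by
      simpa [Complex.real_smul] using congrFun (congrArg WithLp.ofLp hmid) a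
    push_cast at h1
    field_simp
    linear_combination (2 : ℂ) * h1
  -- Step 3: rewrite the vanishing pairing at φm.
  have hφma : ∀ a : Fin 2, φm a = (1 / 2 : ℂ) * (φ₀ a + φ₁ a) := by
    intro a
    rw [hφm]
    simp [Complex.real_smul]
    ring
  have hkey : (∑ a : Fin 2, (starRingEnd ℂ ((Complex.I • φm) a)) * g φm a)
      = (2 * (Γ : ℂ) / (h : ℂ)) *
        ∑ a : Fin 2, (starRingEnd ℂ (φm a)) * (φ₁ a - φ₀ a) := by
    rw [Finset.mul_sum]
    refine Finset.sum_congr rfl fun a _ => ?_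
    have h2 : (Complex.I • φm) a = Complex.I * φm a := rfl
    rw [h2, hg a, map_mul, Complex.conj_I]
    field_simp
    linear_combination (-((starRingEnd ℂ (φm a))*(Γ:ℂ)*(φ₁ a - φ₀ a))) * Complex.I_sq
  -- Step 4: real part of the midpoint pairing vanishes.
  have hS : (∑ a : Fin 2, (starRingEnd ℂ (φm a)) * (φ₁ a - φ₀ a)).re = 0 := by
    have h1 := hzero φm
    rw [hkey] at h1
    have h2 : (2 * (Γ : ℂ) / (h : ℂ)) = ((2 * Γ / h : ℝ) : ℂ) := by push_cast; ring
    rw [h2, Complex.re_ofReal_mul] at h1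
    have h3 : (2 * Γ / h : ℝ) ≠ 0 := by positivity
    exact (mul_eq_zero.mp h1).resolve_left h3
  -- Step 5: expand and conclude norm equality.
  have hdec : (∑ a : Fin 2, (starRingEnd ℂ (φm a)) * (φ₁ a - φ₀ a))
      = ∑ a : Fin 2, ((1 / 2 : ℂ) *
          ((starRingEnd ℂ (φ₁ a) * φ₁ a - starRingEnd ℂ (φ₀ a) * φ₀ a) +
           (starRingEnd ℂ (φ₀ a) * φ₁ a - starRingEnd ℂ (starRingEnd ℂ (φ₀ a) * φ₁ a)))) := by
    refine Finset.sum_congr rfl fun a _ => ?_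
    rw [hφma a, map_mul, map_add]
    simp only [map_mul, Complex.conj_conj, map_div₀, map_one, map_ofNat]
    ring
  have hre : (∑ a : Fin 2, (starRingEnd ℂ (φ₁ a)) * φ₁ a).re
      = (∑ a : Fin 2, (starRingEnd ℂ (φ₀ a)) * φ₀ a).re := by
    have h1 := hS
    rw [hdec] at h1
    simp only [Complex.re_sum, Complex.mul_re, Complex.add_re, Complex.sub_re,
      Complex.conj_re, Complex.conj_im, Fin.sum_univ_two] at h1 ⊢
    norm_num at h1 ⊢
    linarith [h1]
  have hnorm : ∀ x : EuclideanSpace ℂ (Fin 2),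
      (∑ a : Fin 2, (starRingEnd ℂ (x a)) * x a).re = ‖x‖ ^ 2 := by
    intro x
    have := @inner_self_eq_norm_sq ℂ _ _ _ _ x
    rw [← this]
    simp [PiLp.inner_apply, RCLike.inner_apply]
    rw [← Complex.ofReal_pow, Complex.ofReal_re, EuclideanSpace.norm_eq, Real.sq_sqrt (by positivity)]
    simp [Fin.sum_univ_two, Complex.sq_norm, Complex.normSq_apply]
  have hsq : ‖φ₁‖ ^ 2 = ‖φ₀‖ ^ 2 := by rw [← hnorm φ₁, ← hnorm φ₀]; exact hre
  nlinarith [norm_nonneg φ₀, norm_nonneg φ₁, hsq]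
end
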